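/- Isospectral reductions commute with themselves: if A = [[M,C],[D,F]] with M indexed by S, and S′ ⊆ S, then R(λ, S′, R(λ, S, A)) = R(λ, S′, A) for all λ outside the relevant spectra. -/

import Mathlib

open Matrix

/-- Isospectral reduction of a matrix indexed by `α ⊕ β` down to `α`. -/
noncomputable def red {α β : Type} [Fintype α] [Fintype β] [DecidableEq α] [DecidableEq β]
    (lam : ℂ) (A : Matrix (α ⊕ β) (α ⊕ β) ℂ) : Matrix α α ℂ :=
  A.toBlocks₁₁ + A.toBlocks₁₂ * (lam • (1 : Matrix β β ℂ) - A.toBlocks₂₂)⁻¹ * A.toBlocks₂₁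

theorem red_red {α β γ : Type} [Fintype α] [Fintype β] [Fintype γ]
    [DecidableEq α] [DecidableEq β] [DecidableEq γ]
    (lam : ℂ) (A : Matrix ((α ⊕ β) ⊕ γ) ((α ⊕ β) ⊕ γ) ℂ)
    (h1 : IsUnit (lam • (1 : Matrix γ γ ℂ) - A.toBlocks₂₂).det)
    (h3 : IsUnit (lam • (1 : Matrix β β ℂ) - (red lam A).toBlocks₂₂).det) :
    red lam (red lam A) =
      red lam (A.submatrix (Equiv.sumAssoc α β γ).symm (Equiv.sumAssoc α β γ).symm) := by
  set P11 := A.toBlocks₁₁.toBlocks₁₁ with hP11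
  set P12 := A.toBlocks₁₁.toBlocks₁₂ with hP12
  set P21 := A.toBlocks₁₁.toBlocks₂₁ with hP21
  set P22 := A.toBlocks₁₁.toBlocks₂₂ with hP22
  set Q1 := A.toBlocks₁₂.toRows₁ with hQ1
  set Q2 := A.toBlocks₁₂.toRows₂ with hQ2
  set R1 := A.toBlocks₂₁.toCols₁ with hR1
  set R2 := A.toBlocks₂₁.toCols₂ with hR2
  set F := A.toBlocks₂₂ with hF
  set G := (lam • (1 : Matrix γ γ ℂ) - F)⁻¹ with hG
  -- step (a): blocks of `red lam A`
  have ha : red lam A = fromBlocks (P11 + Q1 * G * R1) (P12 + Q1 * G * R2)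
      (P21 + Q2 * G * R1) (P22 + Q2 * G * R2) := by
    rw [red, ← fromBlocks_toBlocks A.toBlocks₁₁, ← fromRows_toRows A.toBlocks₁₂,
      ← fromCols_toCols A.toBlocks₂₁, fromRows_mul, fromRows_mul,
      mul_fromCols, mul_fromCols, fromRows_fromCols_eq_fromBlocks, fromBlocks_add]
  -- step (b): blocks of the re-associated matrix
  set A' := A.submatrix (Equiv.sumAssoc α β γ).symm (Equiv.sumAssoc α β γ).symm with hA'
  have hb11 : A'.toBlocks₁₁ = P11 := by ext i j; rfl
  have hb12 : A'.toBlocks₁₂ = fromCols P12 Q1 := by ext i j; cases j <;> rfl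
  have hb21 : A'.toBlocks₂₁ = fromRows P21 R1 := by ext i j; cases i <;> rfl
  have hb22 : A'.toBlocks₂₂ = fromBlocks P22 Q2 R2 F := by ext i j; cases i <;> cases j <;> rfl
  -- invertibility
  haveI iF : Invertible (lam • (1 : Matrix γ γ ℂ) - F) := invertibleOfIsUnitDet _ h1
  set S := lam • (1 : Matrix β β ℂ) - (P22 + Q2 * G * R2) with hS
  have hSred : (red lam A).toBlocks₂₂ = P22 + Q2 * G * R2 := by
    rw [ha, toBlocks_fromBlocks₂₂]
  haveI iS : Invertible S := by
    rw [hS, ← hSred]; exact invertibleOfIsUnitDet _ h3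
  have hGinv : ⅟(lam • (1 : Matrix γ γ ℂ) - F) = G := by
    rw [hG, invOf_eq_nonsing_inv]
  have hschur : (lam • (1 : Matrix β β ℂ) - P22) -
      (-Q2) * ⅟(lam • (1 : Matrix γ γ ℂ) - F) * (-R2) = S := by
    rw [hGinv]
    simp only [Matrix.neg_mul, Matrix.mul_neg, neg_neg, sub_sub, hS]
  haveI iS' : Invertible ((lam • (1 : Matrix β β ℂ) - P22) -
      (-Q2) * ⅟(lam • (1 : Matrix γ γ ℂ) - F) * (-R2)) := hschur ▸ iS
  have hblk : lam • (1 : Matrix (β ⊕ γ) (β ⊕ γ) ℂ) - fromBlocks P22 Q2 R2 F =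
      fromBlocks (lam • (1 : Matrix β β ℂ) - P22) (-Q2) (-R2)
        (lam • (1 : Matrix γ γ ℂ) - F) := by
    rw [← fromBlocks_one, fromBlocks_smul]
    simp [sub_eq_add_neg, fromBlocks_add, fromBlocks_neg]
  have hMinv : (fromBlocks (lam • (1 : Matrix β β ℂ) - P22) (-Q2) (-R2)
      (lam • (1 : Matrix γ γ ℂ) - F))⁻¹ =
      fromBlocks S⁻¹ (S⁻¹ * Q2 * G) (G * R2 * S⁻¹) (G + G * R2 * S⁻¹ * Q2 * G) := by
    letI := fromBlocks₂₂Invertible (lam • (1 : Matrix β β ℂ) - P22) (-Q2) (-R2)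
      (lam • (1 : Matrix γ γ ℂ) - F)
    rw [← invOf_eq_nonsing_inv, invOf_fromBlocks₂₂_eq,
      invOf_eq_nonsing_inv (lam • (1 : Matrix β β ℂ) - P22 -
        -Q2 * ⅟(lam • (1 : Matrix γ γ ℂ) - F) * -R2), hGinv]
    have hs2 : lam • (1 : Matrix β β ℂ) - P22 - -Q2 * G * -R2 = S := by
      simp only [Matrix.neg_mul, Matrix.mul_neg, neg_neg, sub_sub, hS]
    rw [hs2]
    simp only [Matrix.neg_mul, Matrix.mul_neg, neg_neg]
  -- compute both sides
  rw [red, ha, toBlocks_fromBlocks₁₁, toBlocks_fromBlocks₁₂, toBlocks_fromBlocks₂₁,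
    toBlocks_fromBlocks₂₂, red, hb11, hb12, hb21, hb22, hblk, hMinv, ← hS,
    fromCols_mul_fromBlocks, fromCols_mul_fromRows]
  simp only [Matrix.add_mul, Matrix.mul_add, Matrix.mul_assoc]
  abel

theorem stmt_1 (a b c : ℕ)
    (A : Matrix ((Fin a ⊕ Fin b) ⊕ Fin c) ((Fin a ⊕ Fin b) ⊕ Fin c) ℂ)
    (lam : ℂ)
    -- `λ` is outside the spectrum of the `c`-block (needed for the reduction to `S`),
    (h1 : IsUnit (lam • (1 : Matrix (Fin c) (Fin c) ℂ) - A.toBlocks₂₂).det)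
    -- outside the spectrum of the `(b ⊕ c)`-block (needed for the reduction to `S'`),
    (h2 : IsUnit (lam • (1 : Matrix (Fin b ⊕ Fin c) (Fin b ⊕ Fin c) ℂ) -
      (A.submatrix (Equiv.sumAssoc (Fin a) (Fin b) (Fin c)).symm
        (Equiv.sumAssoc (Fin a) (Fin b) (Fin c)).symm).toBlocks₂₂).det)
    -- and outside the "spectrum" of the `b`-block of the reduced matrix.
    (h3 : IsUnit (lam • (1 : Matrix (Fin b) (Fin b) ℂ) - (red lam A).toBlocks₂₂).det) :
    red lam (red lam A) =
      red lam (A.submatrix (Equiv.sumAssoc (Fin a) (Fin b) (Fin c)).symm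
        (Equiv.sumAssoc (Fin a) (Fin b) (Fin c)).symm) := by
  exact red_red lam A h1 h3
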